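/- Let (A, v, w) be an n-dimensional triple and suppose the row subtraction R_{ji} is permissible for (A, v, w), i.e., a_{jk} ≥ a_{ik} for all k. Let A(1) be obtained from A by subtracting the i-th row from the j-th row, and let v(1) be obtained from v by subtracting v_i from v_j. Then v_j − v_i > 0, and (A(1), v(1), w) is again an n-dimensional triple: A(1) has nonnegative integer entries, det(A(1)) = det(A) = ±1, the entries of v(1) are positive and linearly independent over ℚ, and w = A(1)⁻¹·v(1) has positive entries. -/
import Mathlib

open Matrix

noncomputable def wvec {n : ℕ} (A : Matrix (Fin n) (Fin n) ℤ) (v : Fin n → ℝ) : Fin n → ℝ :=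
  (A.map (Int.cast : ℤ → ℝ))⁻¹ *ᵥ v

structure IsTriple {n : ℕ} (A : Matrix (Fin n) (Fin n) ℤ) (v : Fin n → ℝ) : Prop where
  nonneg : ∀ i j, 0 ≤ A i j
  det_pm : A.det = 1 ∨ A.det = -1
  v_pos : ∀ i, 0 < v i
  v_indep : LinearIndependent ℚ v
  w_pos : ∀ i, 0 < wvec A v i

theorem rowSub_isTriple {n : ℕ} (A : Matrix (Fin n) (Fin n) ℤ) (v : Fin n → ℝ)
    (h : IsTriple A v) (i j : Fin n) (hij : i ≠ j)
    (hperm : ∀ k, A i k ≤ A j k) :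
    0 < v j - v i ∧
    IsTriple (A.updateRow j (fun k => A j k - A i k)) (Function.update v j (v j - v i)) ∧
    (A.updateRow j (fun k => A j k - A i k)).det = A.det ∧
    wvec (A.updateRow j (fun k => A j k - A i k)) (Function.update v j (v j - v i))
      = wvec A v := by
  classical
  set A' := A.updateRow j (fun k => A j k - A i k) with hA'
  set v' := Function.update v j (v j - v i) with hv'
  set w := wvec A v with hw
  -- determinant
  have hdet : A'.det = A.det := by
    have : A' = A.updateRow j (A j + (-1 : ℤ) • A i) := by
      ext k l
      by_cases hk : k = j <;> simp [hA', hk, sub_eq_add_neg]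
    rw [this, det_updateRow_add_smul_self A hij.symm]
  set B := A.map (Int.cast : ℤ → ℝ) with hB
  set B' := A'.map (Int.cast : ℤ → ℝ) with hB'
  have hdetB : B.det = (A.det : ℝ) := by
    rw [hB]; exact ((Int.castRingHom ℝ).map_det A).symm
  have hdetB' : B'.det = (A.det : ℝ) := by
    rw [hB', ← hdet]; exact ((Int.castRingHom ℝ).map_det A').symm
  have hdetne : (A.det : ℝ) ≠ 0 := by
    rcases h.det_pm with h1 | h1 <;> simp [h1]
  have hBu : IsUnit B.det := (isUnit_iff_ne_zero).2 (hdetB ▸ hdetne)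
  have hB'u : IsUnit B'.det := (isUnit_iff_ne_zero).2 (hdetB' ▸ hdetne)
  -- B *ᵥ w = v
  have hBw : B *ᵥ w = v := by
    rw [hw, wvec, ← hB, mulVec_mulVec, mul_nonsing_inv _ hBu, one_mulVec]
  -- B' *ᵥ w = v'
  have hB'w : B' *ᵥ w = v' := by
    funext k
    by_cases hk : k = j
    · subst hk
      have : (B' *ᵥ w) k = ∑ l, ((A k l : ℝ) - (A i l : ℝ)) * w l := by
        simp [hB', mulVec, dotProduct, hA', Matrix.map_apply]
      rw [this, hv', Function.update_self]
      have h1 : ∑ l, ((A k l : ℝ) - (A i l : ℝ)) * w l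
          = (∑ l, (A k l : ℝ) * w l) - ∑ l, (A i l : ℝ) * w l := by
        rw [← Finset.sum_sub_distrib]; congr 1; ext l; ring
      have h2 : (∑ l, (A k l : ℝ) * w l) = v k := by
        have := congrFun hBw k; simpa [hB, mulVec, dotProduct, Matrix.map_apply] using this
      have h3 : (∑ l, (A i l : ℝ) * w l) = v i := by
        have := congrFun hBw i; simpa [hB, mulVec, dotProduct, Matrix.map_apply] using this
      rw [h1, h2, h3]
    · have : (B' *ᵥ w) k = (B *ᵥ w) k := by
        simp [hB', hB, mulVec, dotProduct, hA', Matrix.map_apply, updateRow_ne hk]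
      rw [this, hBw, hv', Function.update_of_ne hk]
  -- wvec A' v' = w
  have hwvec : wvec A' v' = w := by
    rw [wvec, ← hB', ← hB'w, mulVec_mulVec, nonsing_inv_mul _ hB'u, one_mulVec]
  -- positivity of v j - v i
  have hpos : 0 < v j - v i := by
    have hge : 0 ≤ v j - v i := by
      have := congrFun hB'w j
      rw [hv', Function.update_self] at this
      rw [← this]
      simp only [hB', mulVec, dotProduct, Matrix.map_apply, hA', updateRow_self]
      refine Finset.sum_nonneg fun l _ => mul_nonneg ?_ (h.w_pos l).le
      push_cast
      simpa using sub_nonneg.2 (Int.cast_le.2 (hperm l) : (A i l : ℝ) ≤ A j l)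
    have hne : v j ≠ v i := fun he => hij (h.v_indep.injective he).symm
    exact lt_of_le_of_ne hge (fun he => hne (by linarith))
  refine ⟨hpos, ?_, hdet, hwvec ▸ rfl⟩
  constructor
  · intro k l
    by_cases hk : k = j
    · subst hk; simp [hA', sub_nonneg, hperm l]
    · simp [hA', updateRow_ne hk, h.nonneg k l]
  · rw [hdet]; exact h.det_pm
  · intro k
    by_cases hk : k = j
    · subst hk; rw [hv', Function.update_self]; exact hpos
    · rw [hv', Function.update_of_ne hk]; exact h.v_pos k
  · -- linear independence
    rw [Fintype.linearIndependent_iff]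
    intro g hg
    set g' : Fin n → ℚ := fun k => if k = i then g i - g j else g k with hg'
    have key : ∑ k, g' k • v k = ∑ k, g k • v' k := by
      have h1 : ∑ k, (g' k • v k - g k • v k) = -(((g j : ℚ) : ℝ) * v i) := by
        rw [Finset.sum_eq_single i]
        · simp only [hg', if_pos rfl, Rat.smul_def, Rat.cast_sub]; ring
        · intro b _ hb; simp [hg', hb]
        · simp
      have h2 : ∑ k, (g k • v' k - g k • v k) = -(((g j : ℚ) : ℝ) * v i) := by
        rw [Finset.sum_eq_single j]
        · rw [hv', Function.update_self]
          simp only [Rat.smul_def]; ring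
        · intro b _ hb; rw [hv', Function.update_of_ne hb]; ring
        · simp
      have := h1.trans h2.symm
      rw [Finset.sum_sub_distrib, Finset.sum_sub_distrib] at this
      linarith
    have hz := Fintype.linearIndependent_iff.mp h.v_indep g' (by rw [key, hg])
    have hgj : g j = 0 := by
      have := hz j; simpa [hg', Ne.symm hij] using this
    intro k
    by_cases hk : k = i
    · have h1 := hz i
      simp only [hg', if_pos rfl, hgj, sub_zero] at h1
      rw [hk]; exact h1
    · have := hz k; simpa [hg', hk] using this
  · intro k; rw [hwvec]; exact h.w_pos k
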